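/- Fix T > 0, σ ∈ ℝ, R ∈ (0,1], and let α(t) = λ e^{-ρ t} + (1-λ) e^{-γ t} with γ > ρ > 0 and λ ∈ (0,1). If Γ : [0,T] → ℝ is a continuously differentiable function satisfying the Volterra differential-integral equation Γ'(t) + σ² Γ(t) - ((1-R)/R) Γ(t)² + ∫_t^T exp(∫_t^s (σ² - 2((1-R)/R) Γ(r)) dr) · α'(s-t) · ((1-R)/R) Γ(s)² ds + exp(∫_t^T (σ² - 2((1-R)/R) Γ(r)) dr) · α'(T-t) = 0 for all t ∈ [0,T] with Γ(T) = 1, then 0 ≤ Γ(t) ≤ e^{σ²(T-t)} for all t ∈ [0,T]. -/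

import Mathlib

open Real Set

open MeasureTheory intervalIntegral in
private lemma ftc_left (f : ℝ → ℝ) (hf : Continuous f) (b x : ℝ) :
    HasDerivAt (fun t => ∫ s in t..b, f s) (-f x) x :=
  intervalIntegral.integral_hasDerivAt_left (hf.intervalIntegrable x b)
    (hf.stronglyMeasurableAtFilter _ _) hf.continuousAt

open MeasureTheory intervalIntegral in
private lemma isplit (f : ℝ → ℝ) (hf : Continuous f) (t u b : ℝ) :
    ∫ s in t..u, f s = (∫ s in t..b, f s) - ∫ s in u..b, f s := by
  have := intervalIntegral.integral_add_adjacent_intervals (μ := volume)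
    (hf.intervalIntegrable t u) (hf.intervalIntegrable u b)
  linarith

open MeasureTheory intervalIntegral in
private lemma parts_aux (c b : ℝ) (hc : c ≠ 0) (ψ : ℝ → ℝ) (hψ : Continuous ψ) (t : ℝ) :
    ∫ s in t..b, exp (c*s) * (∫ u in s..b, ψ u) =
      -(exp (c*t)/c) * (∫ u in t..b, ψ u) + (1/c) * ∫ s in t..b, exp (c*s) * ψ s := by
  have hΦc : Continuous (fun s => ∫ u in s..b, ψ u) := by
    have : ∀ x, HasDerivAt (fun s => ∫ u in s..b, ψ u) (-ψ x) x := ftc_left ψ hψ b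
    exact continuous_iff_continuousAt.2 fun x => (this x).continuousAt
  have he : Continuous fun s : ℝ => exp (c*s) := by fun_prop
  have hc1 : Continuous fun s => exp (c*s) * (∫ u in s..b, ψ u) := he.mul hΦc
  have hc2 : Continuous fun s => (exp (c*s)/c) * ψ s := (he.div_const c).mul hψ
  have hG : ∀ x : ℝ, HasDerivAt (fun s => exp (c*s)/c * (∫ u in s..b, ψ u))
      (exp (c*x) * (∫ u in x..b, ψ u) - (exp (c*x)/c) * ψ x) x := by
    intro x
    have h1 : HasDerivAt (fun s : ℝ => exp (c*s)/c) (exp (c*x)) x := by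
      have := (((hasDerivAt_id x).const_mul c).exp).div_const c
      simpa [mul_div_assoc, mul_div_cancel_right₀, hc] using this
    have := h1.mul (ftc_left ψ hψ b x)
    exact this.congr_deriv (by ring)
  have key : ∫ s in t..b, (exp (c*s) * (∫ u in s..b, ψ u) - (exp (c*s)/c) * ψ s) =
      (exp (c*b)/c * (∫ u in b..b, ψ u)) - (exp (c*t)/c * (∫ u in t..b, ψ u)) := by
    apply intervalIntegral.integral_eq_sub_of_hasDerivAt (fun x _ => hG x)
    exact (hc1.sub hc2).intervalIntegrable t b
  rw [intervalIntegral.integral_sub (hc1.intervalIntegrable t b) (hc2.intervalIntegrable t b)] at key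
  have h2 : ∫ s in t..b, (exp (c*s)/c) * ψ s = (1/c) * ∫ s in t..b, exp (c*s) * ψ s := by
    rw [← intervalIntegral.integral_const_mul]
    apply intervalIntegral.integral_congr
    intro s _
    ring
  rw [h2] at key
  simp only [intervalIntegral.integral_same, mul_zero] at key
  linarith

open MeasureTheory intervalIntegral in
private lemma eval_piece (c w T t : ℝ) (hc : 0 < c) (κ : ℝ → ℝ) (hκ : Continuous κ) :
    ∫ s in t..T, exp (c*s) * (∫ u in s..T, (w*c) * (exp (-(c*u)) * κ u)) =
      -(∫ u in t..T, w * (exp (-(c*(u-t))) * κ u)) + w * ∫ s in t..T, κ s := by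
  have hψ : Continuous fun u => (w*c) * (exp (-(c*u)) * κ u) := by fun_prop
  rw [parts_aux c T (ne_of_gt hc) _ hψ t]
  have h1 : (1/c) * ∫ s in t..T, exp (c*s) * ((w*c) * (exp (-(c*s)) * κ s)) =
      w * ∫ s in t..T, κ s := by
    rw [← intervalIntegral.integral_const_mul, ← intervalIntegral.integral_const_mul]
    apply intervalIntegral.integral_congr; intro s _
    dsimp only
    have hx : exp (c*s) * exp (-(c*s)) = 1 := by rw [← Real.exp_add]; simp
    rw [show (1/c) * (exp (c*s) * ((w*c) * (exp (-(c*s)) * κ s)))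
        = (w * (c/c)) * ((exp (c*s) * exp (-(c*s))) * κ s) by ring, hx,
      div_self (ne_of_gt hc)]
    ring
  have h2 : (exp (c*t)/c) * ∫ u in t..T, (w*c) * (exp (-(c*u)) * κ u) =
      ∫ u in t..T, w * (exp (-(c*(u-t))) * κ u) := by
    rw [← intervalIntegral.integral_const_mul]
    apply intervalIntegral.integral_congr; intro u _
    dsimp only
    rw [show -(c*(u-t)) = -(c*u) + c*t by ring, Real.exp_add]
    field_simp
  rw [h1, ← h2]; ring


/-- `Γ` (with derivative `Γ'` on `[0,T]`) is a continuously differentiable solution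
of the Volterra differential-integral equation
`Γ'(t) + σ² Γ(t) - ((1-R)/R) Γ(t)²
  + ∫_t^T exp(∫_t^s (σ² - 2((1-R)/R) Γ(r)) dr) α'(s-t) ((1-R)/R) Γ(s)² ds
  + exp(∫_t^T (σ² - 2((1-R)/R) Γ(r)) dr) α'(T-t) = 0`, `Γ(T) = 1`. -/
def IsVDIESolution (T σ R : ℝ) (α Γ Γ' : ℝ → ℝ) : Prop :=
  ContinuousOn Γ' (Set.Icc 0 T) ∧
  (∀ t ∈ Set.Icc (0 : ℝ) T, HasDerivWithinAt Γ (Γ' t) (Set.Icc (0 : ℝ) T) t) ∧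
  (∀ t ∈ Set.Icc (0 : ℝ) T,
    Γ' t + σ ^ 2 * Γ t - ((1 - R) / R) * (Γ t) ^ 2
      + (∫ s in t..T,
          Real.exp (∫ r in t..s, (σ ^ 2 - 2 * ((1 - R) / R) * Γ r))
            * deriv α (s - t) * (((1 - R) / R) * (Γ s) ^ 2))
      + Real.exp (∫ r in t..T, (σ ^ 2 - 2 * ((1 - R) / R) * Γ r))
          * deriv α (T - t) = 0) ∧
  Γ T = 1

open MeasureTheory intervalIntegral in
/-- a priori bound `0 ≤ Γ(t) ≤ e^{σ²(T-t)}` for any continuously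
differentiable solution of the VDIE. -/
theorem vdie_apriori_bound
    (T σ R ρ γ l : ℝ) (hT : 0 < T) (hR0 : 0 < R) (hR1 : R ≤ 1)
    (hρ : 0 < ρ) (hργ : ρ < γ) (hl0 : 0 < l) (hl1 : l < 1)
    (α : ℝ → ℝ)
    (hα : α = fun t : ℝ => l * Real.exp (-ρ * t) + (1 - l) * Real.exp (-γ * t))
    (Γ Γ' : ℝ → ℝ)
    (h : IsVDIESolution T σ R α Γ Γ') :
    ∀ t ∈ Set.Icc (0 : ℝ) T, 0 ≤ Γ t ∧ Γ t ≤ Real.exp (σ ^ 2 * (T - t)) := by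
  obtain ⟨hΓ'c, hΓd, heq, hΓT⟩ := h
  set q : ℝ := (1 - R) / R with hqdef
  have hq : 0 ≤ q := div_nonneg (by linarith) hR0.le
  have hγ : 0 < γ := lt_trans hρ hργ
  have hΓc : ContinuousOn Γ (Icc 0 T) := fun x hx => (hΓd x hx).continuousWithinAt
  -- clamp
  set G : ℝ → ℝ := fun x => Γ (min (max x 0) T) with hGdef
  have hGc : Continuous G := by
    rw [hGdef]
    exact hΓc.comp_continuous ((continuous_id.max continuous_const).min continuous_const)
      (fun x => ⟨le_min (le_max_right x 0) hT.le, min_le_right _ _⟩)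
  have hGΓ : ∀ x ∈ Icc (0:ℝ) T, G x = Γ x := by
    intro x hx
    rw [hGdef]; dsimp only; rw [max_eq_left hx.1, min_eq_left hx.2]
  set pt : ℝ → ℝ := fun r => σ^2 - 2*q*G r with hptdef
  have hptc : Continuous pt := by
    rw [hptdef]; exact continuous_const.sub (continuous_const.mul hGc)
  set A : ℝ → ℝ := fun t => ∫ r in t..T, pt r with hAdef
  have hA : ∀ x, HasDerivAt A (-pt x) x := by rw [hAdef]; exact ftc_left pt hptc T
  have hAc : Continuous A := continuous_iff_continuousAt.2 fun x => (hA x).continuousAt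
  have hAT : A T = 0 := by rw [hAdef]; exact intervalIntegral.integral_same
  have hsplitA : ∀ t u : ℝ, ∫ r in t..u, pt r = A t - A u := by
    intro t u; rw [hAdef]; exact isplit pt hptc t u T
  have huIcc : ∀ t ∈ Icc (0:ℝ) T, ∀ u ∈ Icc (0:ℝ) T, uIcc t u ⊆ Icc 0 T := by
    intro t ht u hu
    rw [← uIcc_of_le hT.le]
    exact uIcc_subset_uIcc (by rwa [uIcc_of_le hT.le]) (by rwa [uIcc_of_le hT.le])
  have hinner : ∀ t ∈ Icc (0:ℝ) T, ∀ u ∈ Icc (0:ℝ) T,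
      (∫ r in t..u, (σ^2 - 2*q*Γ r)) = A t - A u := by
    intro t ht u hu
    rw [← hsplitA t u]
    apply intervalIntegral.integral_congr
    intro r hr
    rw [hptdef]; dsimp only; rw [hGΓ r (huIcc t ht u hu hr)]
  -- derivative of α
  set αd : ℝ → ℝ := fun u => -(l*ρ*exp (-(ρ*u))) - (1-l)*γ*exp (-(γ*u)) with hαddef
  have hαdc : Continuous αd := by rw [hαddef]; fun_prop
  have hαd : ∀ u, HasDerivAt α (αd u) u := by
    intro u
    rw [hα, hαddef]
    have h1 : HasDerivAt (fun u : ℝ => -ρ*u) (-ρ) u := by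
      simpa using (hasDerivAt_id u).const_mul (-ρ)
    have h2 : HasDerivAt (fun u : ℝ => -γ*u) (-γ) u := by
      simpa using (hasDerivAt_id u).const_mul (-γ)
    have := (h1.exp.const_mul l).add (h2.exp.const_mul (1-l))
    refine this.congr_deriv ?_
    show _ = -(l*ρ*exp (-(ρ*u))) - (1-l)*γ*exp (-(γ*u))
    rw [show -(ρ*u) = -ρ*u by ring, show -(γ*u) = -γ*u by ring]
    ring
  have hderivα : ∀ u, deriv α u = αd u := fun u => (hαd u).deriv
  have hαdneg : ∀ u, αd u < 0 := by
    intro u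
    rw [hαddef]; dsimp only
    nlinarith [mul_pos (mul_pos hl0 hρ) (exp_pos (-(ρ*u))),
      mul_pos (mul_pos (by linarith : (0:ℝ) < 1-l) hγ) (exp_pos (-(γ*u)))]
  have hαpos : ∀ u, 0 < α u := by
    intro u
    rw [hα]; dsimp only
    nlinarith [mul_pos hl0 (exp_pos (-ρ*u)),
      mul_pos (by linarith : (0:ℝ) < 1-l) (exp_pos (-γ*u))]
  have hα0 : α 0 = 1 := by rw [hα]; simp
  have hΓat : ∀ x ∈ Ioo (0:ℝ) T, HasDerivAt Γ (Γ' x) x := fun x hx =>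
    (hΓd x (Ioo_subset_Icc_self hx)).hasDerivAt (Icc_mem_nhds hx.1 hx.2)
  -- sign facts used for the upper bound
  have hnn : ∀ s ∈ Icc (0:ℝ) T, 0 ≤ Γ' s + σ^2 * Γ s := by
    intro s hs
    have e := heq s hs
    have hI : (∫ u in s..T, exp (∫ r in s..u, (σ^2 - 2*q*Γ r)) * deriv α (u - s)
        * (q * Γ u ^ 2)) ≤ 0 := by
      have h0 : ∀ u ∈ Icc s T, 0 ≤ -(exp (∫ r in s..u, (σ^2 - 2*q*Γ r)) * deriv α (u - s)
          * (q * Γ u ^ 2)) := by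
        intro u hu
        have h1 : exp (∫ r in s..u, (σ^2 - 2*q*Γ r)) * deriv α (u - s) ≤ 0 :=
          mul_nonpos_of_nonneg_of_nonpos (exp_pos _).le
            (by rw [hderivα]; exact (hαdneg _).le)
        have h2 : 0 ≤ q * Γ u ^ 2 := mul_nonneg hq (sq_nonneg _)
        nlinarith
      have := intervalIntegral.integral_nonneg (μ := volume) hs.2 h0
      rw [intervalIntegral.integral_neg] at this
      linarith
    have hE : exp (∫ r in s..T, (σ^2 - 2*q*Γ r)) * deriv α (T - s) ≤ 0 :=
      mul_nonpos_of_nonneg_of_nonpos (exp_pos _).le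
        (by rw [hderivα]; exact (hαdneg _).le)
    have hq2 : 0 ≤ q * Γ s ^ 2 := mul_nonneg hq (sq_nonneg _)
    linarith
  -- upper bound
  have hub : ∀ t ∈ Icc (0:ℝ) T, Γ t ≤ exp (σ^2*(T - t)) := by
    intro t ht
    have hsub : Icc t T ⊆ Icc (0:ℝ) T := Icc_subset_Icc ht.1 le_rfl
    have hec : Continuous fun s : ℝ => exp (σ^2*s) := by fun_prop
    have hftc : ∫ s in t..T, exp (σ^2*s) * (Γ' s + σ^2 * Γ s)
        = exp (σ^2*T) * Γ T - exp (σ^2*t) * Γ t := by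
      apply intervalIntegral.integral_eq_sub_of_hasDeriv_right_of_le ht.2
      · exact hec.continuousOn.mul (hΓc.mono hsub)
      · intro x hx
        have hxI : x ∈ Ioo (0:ℝ) T := ⟨lt_of_le_of_lt ht.1 hx.1, hx.2⟩
        have h1 : HasDerivAt (fun s : ℝ => exp (σ^2*s)) (exp (σ^2*x) * σ^2) x := by
          have : HasDerivAt (fun s : ℝ => σ^2*s) (σ^2) x := by
            simpa using (hasDerivAt_id x).const_mul (σ^2)
          exact this.exp
        have h2 : HasDerivAt (fun s => exp (σ^2*s) * Γ s)
            (exp (σ^2*x) * (Γ' x + σ^2 * Γ x)) x := by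
          have := h1.mul (hΓat x hxI)
          exact this.congr_deriv (by ring)
        exact h2.hasDerivWithinAt
      · apply ContinuousOn.intervalIntegrable
        rw [uIcc_of_le ht.2]
        exact hec.continuousOn.mul ((hΓ'c.mono hsub).add
          (continuousOn_const.mul (hΓc.mono hsub)))
    have hpos : 0 ≤ ∫ s in t..T, exp (σ^2*s) * (Γ' s + σ^2 * Γ s) :=
      intervalIntegral.integral_nonneg ht.2
        (fun u hu => mul_nonneg (exp_pos _).le (hnn u ⟨le_trans ht.1 hu.1, hu.2⟩))
    rw [hΓT] at hftc
    have h3 : Γ t ≤ exp (σ^2*T) / exp (σ^2*t) := by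
      rw [le_div_iff₀ (exp_pos _)]; nlinarith
    calc Γ t ≤ exp (σ^2*T) / exp (σ^2*t) := h3
      _ = exp (σ^2*(T - t)) := by rw [← exp_sub]; ring_nf
  -- lower bound machinery
  set κ : ℝ → ℝ := fun u => exp (-A u) * (q * G u ^ 2) with hκdef
  have hκc : Continuous κ := by
    rw [hκdef]; exact (hAc.neg.rexp).mul (continuous_const.mul (hGc.pow 2))
  have hκnn : ∀ u, 0 ≤ κ u := by
    intro u; rw [hκdef]; dsimp only
    exact mul_nonneg (exp_pos _).le (mul_nonneg hq (sq_nonneg _))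
  set ψ₁ : ℝ → ℝ := fun u => (l*ρ) * (exp (-(ρ*u)) * κ u) with hψ₁def
  set ψ₂ : ℝ → ℝ := fun u => ((1-l)*γ) * (exp (-(γ*u)) * κ u) with hψ₂def
  have hψ₁c : Continuous ψ₁ := by rw [hψ₁def]; fun_prop
  have hψ₂c : Continuous ψ₂ := by rw [hψ₂def]; fun_prop
  set Φ₁ : ℝ → ℝ := fun s => ∫ u in s..T, ψ₁ u with hΦ₁def
  set Φ₂ : ℝ → ℝ := fun s => ∫ u in s..T, ψ₂ u with hΦ₂def
  have hΦ₁c : Continuous Φ₁ := by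
    rw [hΦ₁def]
    exact continuous_iff_continuousAt.2 fun x => (ftc_left ψ₁ hψ₁c T x).continuousAt
  have hΦ₂c : Continuous Φ₂ := by
    rw [hΦ₂def]
    exact continuous_iff_continuousAt.2 fun x => (ftc_left ψ₂ hψ₂c T x).continuousAt
  set V : ℝ → ℝ := fun s => -κ s + exp (ρ*s) * Φ₁ s + exp (γ*s) * Φ₂ s - αd (T - s)
    with hVdef
  have hVc : Continuous V := by
    rw [hVdef]
    apply Continuous.sub
    · exact (hκc.neg.add ((by fun_prop : Continuous fun s : ℝ => exp (ρ*s)).mul hΦ₁c)).add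
        ((by fun_prop : Continuous fun s : ℝ => exp (γ*s)).mul hΦ₂c)
    · exact hαdc.comp (continuous_const.sub continuous_id)
  -- pointwise identity
  have hVeq : ∀ s ∈ Icc (0:ℝ) T, exp (-A s) * (Γ' s + pt s * Γ s) = V s := by
    intro s hs
    have e := heq s hs
    have hI : (∫ u in s..T, exp (∫ r in s..u, (σ^2 - 2*q*Γ r)) * deriv α (u - s)
          * (q * Γ u ^ 2))
        = exp (A s) * (-(exp (ρ*s) * Φ₁ s) - exp (γ*s) * Φ₂ s) := by
      have hcongr : EqOn
          (fun u => exp (∫ r in s..u, (σ^2 - 2*q*Γ r)) * deriv α (u - s) * (q * Γ u ^ 2))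
          (fun u => exp (A s) * (-(exp (ρ*s) * ψ₁ u) - exp (γ*s) * ψ₂ u)) (uIcc s T) := by
        intro u hu
        have huI : u ∈ Icc (0:ℝ) T := huIcc s hs T ⟨hT.le, le_rfl⟩ hu
        dsimp only
        rw [hinner s hs u huI, hderivα, ← hGΓ u huI, hψ₁def, hψ₂def, hκdef, hαddef]
        dsimp only
        rw [show A s - A u = A s + -A u by ring, Real.exp_add,
          show (u : ℝ) - s = u - s by rfl]
        rw [show -(ρ*(u-s)) = -(ρ*u) + ρ*s by ring, Real.exp_add,
          show -(γ*(u-s)) = -(γ*u) + γ*s by ring, Real.exp_add]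
        ring
      have i1 : ∫ u in s..T, exp (ρ*s) * ψ₁ u = exp (ρ*s) * Φ₁ s := by
        rw [hΦ₁def]; exact intervalIntegral.integral_const_mul _ _
      have i2 : ∫ u in s..T, exp (γ*s) * ψ₂ u = exp (γ*s) * Φ₂ s := by
        rw [hΦ₂def]; exact intervalIntegral.integral_const_mul _ _
      rw [intervalIntegral.integral_congr hcongr, intervalIntegral.integral_const_mul]
      congr 1
      rw [intervalIntegral.integral_sub (f := fun u => -(exp (ρ*s) * ψ₁ u))
          (g := fun u => exp (γ*s) * ψ₂ u)
          (((continuous_const.mul hψ₁c).neg).intervalIntegrable s T)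
          ((continuous_const.mul hψ₂c).intervalIntegrable s T),
        intervalIntegral.integral_neg, i1, i2]
    have hE : exp (∫ r in s..T, (σ^2 - 2*q*Γ r)) * deriv α (T - s)
        = exp (A s) * αd (T - s) := by
      rw [hinner s hs T ⟨hT.le, le_rfl⟩, hAT, hderivα, sub_zero]
    rw [hI, hE] at e
    have hptΓ : pt s * Γ s = σ^2 * Γ s - 2*q*Γ s ^ 2 := by
      rw [hptdef]; dsimp only; rw [hGΓ s hs]; ring
    have hee : exp (-A s) * exp (A s) = 1 := by rw [← Real.exp_add]; simp
    have hκs : κ s = exp (-A s) * (q * Γ s ^ 2) := by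
      rw [hκdef]; dsimp only; rw [hGΓ s hs]
    have key : Γ' s + pt s * Γ s = -(q*Γ s ^ 2)
        - exp (A s) * (-(exp (ρ*s) * Φ₁ s) - exp (γ*s) * Φ₂ s)
        - exp (A s) * αd (T - s) := by
      rw [hptΓ]; linarith
    rw [key, hVdef]; dsimp only
    rw [show exp (-A s) * (-(q*Γ s ^ 2)
        - exp (A s) * (-(exp (ρ*s) * Φ₁ s) - exp (γ*s) * Φ₂ s)
        - exp (A s) * αd (T - s))
      = -(exp (-A s) * (q * Γ s ^ 2))
        - (exp (-A s) * exp (A s)) * (-(exp (ρ*s) * Φ₁ s) - exp (γ*s) * Φ₂ s)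
        - (exp (-A s) * exp (A s)) * αd (T - s) by ring, hee, hκs]
    ring
  -- main integral identity
  have hmain : ∀ t ∈ Icc (0:ℝ) T, ∫ s in t..T, V s = 1 - Γ t * exp (-A t) := by
    intro t ht
    have hres : ∫ s in t..T, V s = Γ T * exp (-A T) - Γ t * exp (-A t) := by
      apply intervalIntegral.integral_eq_sub_of_hasDeriv_right_of_le ht.2
      · exact (hΓc.mono (Icc_subset_Icc ht.1 le_rfl)).mul hAc.neg.rexp.continuousOn
      · intro x hx
        have hxI : x ∈ Ioo (0:ℝ) T := ⟨lt_of_le_of_lt ht.1 hx.1, hx.2⟩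
        have h2 : HasDerivAt (fun s => exp (-A s)) (exp (-A x) * pt x) x := by
          have := ((hA x).neg).exp
          simpa using this
        have h3 : HasDerivAt (fun s => Γ s * exp (-A s)) (V x) x := by
          have := (hΓat x hxI).mul h2
          exact this.congr_deriv (by rw [← hVeq x (Ioo_subset_Icc_self hxI)]; ring)
        exact h3.hasDerivWithinAt
      · exact hVc.intervalIntegrable t T
    rw [hΓT, hAT] at hres
    simpa using hres
  -- conclude
  intro t ht
  refine ⟨?_, hub t ht⟩
  have heρ : Continuous fun s : ℝ => exp (ρ*s) := by fun_prop
  have heγ : Continuous fun s : ℝ => exp (γ*s) := by fun_prop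
  have hc4 : Continuous fun s : ℝ => αd (T - s) :=
    hαdc.comp (continuous_const.sub continuous_id)
  have hsplitV : ∫ s in t..T, V s = -(∫ s in t..T, κ s)
      + (∫ s in t..T, exp (ρ*s) * Φ₁ s) + (∫ s in t..T, exp (γ*s) * Φ₂ s)
      - ∫ s in t..T, αd (T - s) := by
    simp only [hVdef]
    rw [intervalIntegral.integral_sub
        (f := fun s => -κ s + exp (ρ*s) * Φ₁ s + exp (γ*s) * Φ₂ s) (g := fun s => αd (T - s))
        (((hκc.neg.add (heρ.mul hΦ₁c)).add (heγ.mul hΦ₂c)).intervalIntegrable t T)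
        (hc4.intervalIntegrable t T),
      intervalIntegral.integral_add
        (f := fun s => -κ s + exp (ρ*s) * Φ₁ s) (g := fun s => exp (γ*s) * Φ₂ s)
        ((hκc.neg.add (heρ.mul hΦ₁c)).intervalIntegrable t T)
        ((heγ.mul hΦ₂c).intervalIntegrable t T),
      intervalIntegral.integral_add (f := fun s => -κ s) (g := fun s => exp (ρ*s) * Φ₁ s)
        (hκc.neg.intervalIntegrable t T)
        ((heρ.mul hΦ₁c).intervalIntegrable t T),
      intervalIntegral.integral_neg]
  have e1 : ∫ s in t..T, exp (ρ*s) * Φ₁ s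
      = -(∫ u in t..T, l * (exp (-(ρ*(u-t))) * κ u)) + l * ∫ s in t..T, κ s := by
    rw [hΦ₁def, hψ₁def]
    exact eval_piece ρ l T t hρ κ hκc
  have e2 : ∫ s in t..T, exp (γ*s) * Φ₂ s
      = -(∫ u in t..T, (1-l) * (exp (-(γ*(u-t))) * κ u)) + (1-l) * ∫ s in t..T, κ s := by
    rw [hΦ₂def, hψ₂def]
    exact eval_piece γ (1-l) T t hγ κ hκc
  have e4 : ∫ s in t..T, αd (T - s) = α (T - t) - 1 := by
    have hF : ∀ x : ℝ, HasDerivAt (fun s => -α (T - s)) (αd (T - x)) x := by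
      intro x
      have h1 : HasDerivAt (fun s : ℝ => T - s) (-1) x := by
        exact ((hasDerivAt_const x T).sub (hasDerivAt_id x)).congr_deriv (by norm_num)
      have := ((hαd (T - x)).comp x h1).neg
      exact this.congr_deriv (by ring)
    have := intervalIntegral.integral_eq_sub_of_hasDerivAt (fun x _ => hF x)
      (hc4.intervalIntegrable t T)
    rw [this, sub_self, hα0]
    ring
  have hQ1 : 0 ≤ ∫ u in t..T, l * (exp (-(ρ*(u-t))) * κ u) :=
    intervalIntegral.integral_nonneg ht.2
      (fun u _ => mul_nonneg hl0.le (mul_nonneg (exp_pos _).le (hκnn u)))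
  have hQ2 : 0 ≤ ∫ u in t..T, (1-l) * (exp (-(γ*(u-t))) * κ u) :=
    intervalIntegral.integral_nonneg ht.2
      (fun u _ => mul_nonneg (by linarith) (mul_nonneg (exp_pos _).le (hκnn u)))
  have hm := hmain t ht
  rw [hsplitV, e1, e2, e4] at hm
  have hcancel : l * (∫ s in t..T, κ s) + (1-l) * (∫ s in t..T, κ s)
      - (∫ s in t..T, κ s) = 0 := by ring
  have hfin : Γ t * exp (-A t) = α (T - t)
      + (∫ u in t..T, l * (exp (-(ρ*(u-t))) * κ u))
      + (∫ u in t..T, (1-l) * (exp (-(γ*(u-t))) * κ u)) := by linarith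
  have hαp := hαpos (T - t)
  have hep := exp_pos (-A t)
  by_contra hneg
  push_neg at hneg
  nlinarith
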